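/- The grim reaper Schwarz function S(z,t) = z + Log(e^{t−z} − 1) (principal complex logarithm) satisfies the curve-shortening Schwarz function equation: for every (z,t) ∈ ℂ × ℝ such that e^{t−z} − 1 does not lie in the closed negative real axis (−∞,0], one has S_t = e^{t−z}/(e^{t−z} − 1), S_z = −1/(e^{t−z} − 1), S_zz = −e^{t−z}/(e^{t−z} − 1)², and therefore S_t S_z = S_zz. -/

import Mathlib

/-- The grim reaper Schwarz function `S(z,t) = z + Log(e^{t−z} − 1)` satisfies the
curve-shortening Schwarz function equation `S_t S_z = S_zz` wherever `e^{t−z} − 1`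
avoids the closed negative real axis. -/
theorem grim_reaper_schwarz (z : ℂ) (t : ℝ)
    (hslit : ∀ x : ℝ, x ≤ 0 → Complex.exp ((t : ℂ) - z) - 1 ≠ (x : ℂ)) :
    HasDerivAt (fun s : ℝ => z + Complex.log (Complex.exp ((s : ℂ) - z) - 1))
      (Complex.exp ((t : ℂ) - z) / (Complex.exp ((t : ℂ) - z) - 1)) t ∧
    HasDerivAt (fun w : ℂ => w + Complex.log (Complex.exp ((t : ℂ) - w) - 1))
      (-1 / (Complex.exp ((t : ℂ) - z) - 1)) z ∧
    HasDerivAt (fun w : ℂ => -1 / (Complex.exp ((t : ℂ) - w) - 1))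
      (-Complex.exp ((t : ℂ) - z) / (Complex.exp ((t : ℂ) - z) - 1) ^ 2) z ∧
    (Complex.exp ((t : ℂ) - z) / (Complex.exp ((t : ℂ) - z) - 1)) *
        (-1 / (Complex.exp ((t : ℂ) - z) - 1))
      = -Complex.exp ((t : ℂ) - z) / (Complex.exp ((t : ℂ) - z) - 1) ^ 2 := by
  set E := Complex.exp ((t : ℂ) - z) with hE
  have hw : E - 1 ∈ Complex.slitPlane := by
    rw [Complex.mem_slitPlane_iff]
    by_contra h
    push_neg at h
    exact hslit (E - 1).re h.1 (Complex.ext (by simp) (by simp [h.2]))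
  have hne : E - 1 ≠ 0 := Complex.slitPlane_ne_zero hw
  have hlog := Complex.hasDerivAt_log hw
  -- time derivative
  have hinner_t : HasDerivAt (fun s : ℝ => Complex.exp ((s : ℂ) - z) - 1) E t := by
    have h0 : HasDerivAt (fun s : ℝ => (s : ℂ)) 1 t := Complex.ofRealCLM.hasDerivAt
    simpa using (((h0.sub_const z).cexp).sub_const 1)
  have h1 : HasDerivAt (fun s : ℝ => z + Complex.log (Complex.exp ((s : ℂ) - z) - 1))
      (E / (E - 1)) t := by
    have := (hlog.comp t hinner_t).const_add z
    convert this using 1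
    · rfl
    · rfl
    field_simp
  -- space derivative of S
  have hinner_z : HasDerivAt (fun w : ℂ => Complex.exp ((t : ℂ) - w) - 1) (-E) z := by
    have h0 : HasDerivAt (fun w : ℂ => (t : ℂ) - w) (-1) z := (hasDerivAt_id z).const_sub _
    simpa using ((h0.cexp).sub_const 1)
  have h2 : HasDerivAt (fun w : ℂ => w + Complex.log (Complex.exp ((t : ℂ) - w) - 1))
      (-1 / (E - 1)) z := by
    have := (hasDerivAt_id z).add (hlog.comp z hinner_z)
    convert this using 1
    · rfl
    · rfl
    · rfl
    field_simp
    ring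
  -- second space derivative
  have h3 : HasDerivAt (fun w : ℂ => -1 / (Complex.exp ((t : ℂ) - w) - 1))
      (-E / (E - 1) ^ 2) z := by
    have := (hinner_z.inv hne).neg
    convert this using 1
    · rfl
    · rfl
    · funext w; rw [neg_div, one_div]; rfl
    · ring
  refine ⟨h1, h2, h3, ?_⟩
  field_simp
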